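/- Let n, k ∈ ℕ with 1 ≤ k ≤ n. Then C(n,k)·(k/n)^k·(1 − k/n)^{n−k} ≤ e^{k²/n} / √(2πk). In particular, the probability that a binomial random variable with n trials and success probability k/n equals k is at most e^{k²/n} / √(2πk). -/

import Mathlib

open Real Nat

lemma sqrt_pi_le_stirlingSeq (k : ℕ) (hk : 1 ≤ k) :
    Real.sqrt Real.pi ≤ Stirling.stirlingSeq k := by
  obtain ⟨m, rfl⟩ := Nat.exists_eq_add_of_le hk
  have htend : Filter.Tendsto (Stirling.stirlingSeq ∘ Nat.succ) Filter.atTop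
      (nhds (Real.sqrt Real.pi)) := by
    exact
      (Filter.tendsto_add_atTop_iff_nat 1).mpr Stirling.tendsto_stirlingSeq_sqrt_pi
  have := Stirling.stirlingSeq'_antitone.le_of_tendsto htend m
  simpa [Function.comp, Nat.succ_eq_add_one, Nat.add_comm] using this

lemma factorial_stirling_lb (k : ℕ) (hk : 1 ≤ k) :
    Real.sqrt (2 * Real.pi * k) * ((k : ℝ) / Real.exp 1) ^ k ≤ (k ! : ℝ) := by
  have hs := sqrt_pi_le_stirlingSeq k hk
  rw [Stirling.stirlingSeq] at hs
  have hpos : (0:ℝ) < Real.sqrt (2 * k) * ((k : ℝ) / Real.exp 1) ^ k := by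
    have hk0 : (0:ℝ) < k := by exact_mod_cast hk
    positivity
  rw [le_div_iff₀ hpos] at hs
  calc Real.sqrt (2 * Real.pi * k) * ((k : ℝ) / Real.exp 1) ^ k
      = Real.sqrt Real.pi * (Real.sqrt (2 * k) * ((k : ℝ) / Real.exp 1) ^ k) := by
        rw [← mul_assoc, ← Real.sqrt_mul (by positivity)]
        ring_nf
    _ ≤ (k ! : ℝ) := hs

/-- For `1 ≤ k ≤ n`:
`C(n,k)·(k/n)^k·(1 − k/n)^{n−k} ≤ e^{k²/n}/√(2πk)`; this is an upper bound on
the probability that a binomial random variable with `n` trials and success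
probability `k/n` equals `k`. -/
theorem choose_mul_pow_le (n k : ℕ) (h1 : 1 ≤ k) (h2 : k ≤ n) :
    (n.choose k : ℝ) * ((k : ℝ) / n) ^ k * (1 - (k : ℝ) / n) ^ (n - k) ≤
      Real.exp ((k : ℝ) ^ 2 / n) / Real.sqrt (2 * Real.pi * k) := by
  have hk0 : (0:ℝ) < k := by exact_mod_cast h1
  have hn0 : (0:ℝ) < n := lt_of_lt_of_le hk0 (by exact_mod_cast h2)
  have hkn : (k:ℝ) ≤ n := by exact_mod_cast h2
  have hx1 : (k:ℝ)/n ≤ 1 := (div_le_one hn0).mpr hkn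
  have hx0 : (0:ℝ) ≤ (k:ℝ)/n := by positivity
  have hsqrt : (0:ℝ) < Real.sqrt (2 * Real.pi * k) := by
    apply Real.sqrt_pos.mpr; positivity
  -- Step B : (1 - k/n)^(n-k) ≤ exp (-(k/n) * (n-k))
  have hB : (1 - (k : ℝ) / n) ^ (n - k) ≤ Real.exp (-( (k:ℝ)/n) * ((n:ℝ) - k)) := by
    have hbase : 1 - (k:ℝ)/n ≤ Real.exp (-((k:ℝ)/n)) := by
      have := Real.add_one_le_exp (-((k:ℝ)/n))
      linarith
    have := pow_le_pow_left₀ (by linarith) hbase (n - k)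
    refine this.trans_eq ?_
    rw [← Real.exp_nat_mul]
    congr 1
    rw [Nat.cast_sub h2]
    ring
  -- Step A : choose bound
  have hA : (n.choose k : ℝ) ≤ (n:ℝ) ^ k / (k ! : ℝ) := by
    exact_mod_cast Nat.choose_le_pow_div k n
  -- Step C : k^k / k! ≤ exp k / sqrt(2πk)
  have hC : (k:ℝ) ^ k / (k ! : ℝ) ≤ Real.exp k / Real.sqrt (2 * Real.pi * k) := by
    have hfac := factorial_stirling_lb k h1
    rw [div_le_div_iff₀ (by positivity) hsqrt]
    calc (k:ℝ) ^ k * Real.sqrt (2 * Real.pi * k)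
        = Real.exp k * (Real.sqrt (2 * Real.pi * k) * ((k : ℝ) / Real.exp 1) ^ k) := by
          rw [div_pow, show Real.exp (k:ℝ) = Real.exp 1 ^ k by
            rw [← Real.exp_nat_mul]; norm_num]
          field_simp
      _ ≤ Real.exp k * (k ! : ℝ) := by
          exact mul_le_mul_of_nonneg_left hfac (Real.exp_pos _).le
  -- combine
  have hmain : (n.choose k : ℝ) * ((k : ℝ) / n) ^ k * (1 - (k : ℝ) / n) ^ (n - k) ≤
      ((k:ℝ) ^ k / (k ! : ℝ)) * Real.exp (-((k:ℝ)/n) * ((n:ℝ) - k)) := by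
    have h1' : (n.choose k : ℝ) * ((k : ℝ) / n) ^ k ≤ (k:ℝ) ^ k / (k ! : ℝ) := by
      have heq : ((n:ℝ) ^ k / (k ! : ℝ)) * ((k : ℝ) / n) ^ k = (k:ℝ) ^ k / (k ! : ℝ) := by
        rw [div_pow]
        field_simp
      calc (n.choose k : ℝ) * ((k : ℝ) / n) ^ k
          ≤ ((n:ℝ) ^ k / (k ! : ℝ)) * ((k : ℝ) / n) ^ k :=
            mul_le_mul_of_nonneg_right hA (by positivity)
        _ = (k:ℝ) ^ k / (k ! : ℝ) := heq
    calc (n.choose k : ℝ) * ((k : ℝ) / n) ^ k * (1 - (k : ℝ) / n) ^ (n - k)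
        ≤ (n.choose k : ℝ) * ((k : ℝ) / n) ^ k * Real.exp (-((k:ℝ)/n) * ((n:ℝ) - k)) := by
          apply mul_le_mul_of_nonneg_left hB
          positivity
      _ ≤ ((k:ℝ) ^ k / (k ! : ℝ)) * Real.exp (-((k:ℝ)/n) * ((n:ℝ) - k)) :=
          mul_le_mul_of_nonneg_right h1' (Real.exp_pos _).le
  refine hmain.trans ?_
  have : ((k:ℝ) ^ k / (k ! : ℝ)) * Real.exp (-((k:ℝ)/n) * ((n:ℝ) - k)) ≤
      (Real.exp k / Real.sqrt (2 * Real.pi * k)) * Real.exp (-((k:ℝ)/n) * ((n:ℝ) - k)) :=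
    mul_le_mul_of_nonneg_right hC (Real.exp_pos _).le
  refine this.trans_eq ?_
  rw [div_mul_eq_mul_div, ← Real.exp_add]
  congr 1
  field_simp
  ring
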